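/- arXiv:2411.10128 — 2 statements merged into one kernel-verified Lean document; each statement's English description precedes it below -/
import Mathlib

section
/- Let X be a measurable space, c > 0, and let ρ be a probability measure on X × ℝ such that √c·|y| < 1 for ρ-almost every (x,y). Write φ(y) := (1/√c)·artanh(√c·y), assume (x,y) ↦ φ(y) is square-integrable with respect to ρ, and let f_ρ : X → ℝ be the hyperbolic regression function, i.e. f_ρ ∘ Prod.fst is the conditional expectation of (x,y) ↦ φ(y) with respect to the σ-algebra generated by Prod.fst. Then for every measurable g : X → ℝ such that (x,y) ↦ g(x) is square-integrable with respect to ρ, the hyperbolic generalization error satisfies ∫ (g(x) − φ(y))² dρ(x,y) ≥ ∫ (f_ρ(x) − φ(y))² dρ(x,y); that is, the hyperbolic regression function minimizes the hyperbolic generalization error. -/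
open MeasureTheory

/-- Inverse hyperbolic tangent. -/
noncomputable def Real.artanhLog (x : ℝ) : ℝ := (1 / 2) * Real.log ((1 + x) / (1 - x))

/-- The one-dimensional logarithmic map at the origin of the Poincaré disc of
curvature `-c`:  `φ(y) = (1/√c) · artanh(√c · y)`. -/
noncomputable def hypLog (c : ℝ) (y : ℝ) : ℝ :=
  (1 / Real.sqrt c) * Real.artanhLog (Real.sqrt c * y)

/-- Product of two L² functions is integrable. -/
lemma integrable_mul_of_memL2 {α : Type*} [MeasurableSpace α] {μ : Measure α}
    {a b : α → ℝ} (ha : MemLp a 2 μ) (hb : MemLp b 2 μ) :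
    Integrable (fun x => a x * b x) μ := by
  have h := (((ha.add hb).integrable_sq).sub ha.integrable_sq).sub hb.integrable_sq
  have heq : (fun x => a x * b x) = fun x => ((a x + b x) ^ 2 - a x ^ 2 - b x ^ 2) / 2 := by
    funext x; ring
  rw [heq]
  exact h.div_const 2

/-- The conditional expectation of an L² function is L². -/
lemma memℒp_condexp_two {α : Type*} {m m0 : MeasurableSpace α}
    (hm : m ≤ m0) (μ : Measure α) [IsFiniteMeasure μ] {f : α → ℝ} (hf : MemLp f 2 μ) :
    MemLp (μ[f|m]) 2 μ := by
  haveI : SigmaFinite (μ.trim hm) := (isFiniteMeasure_trim hm).toSigmaFinite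
  have hfi : Integrable f μ := hf.integrable one_le_two
  set fL : Lp ℝ 2 μ := hf.toLp f with hfL
  have h_eq : (condExpL2 ℝ ℝ hm fL : α → ℝ) =ᵐ[μ] μ[f|m] := by
    refine ae_eq_condExp_of_forall_setIntegral_eq hm hfi ?_ ?_ ?_
    · intro s _ hμs
      exact integrableOn_condExpL2_of_measure_ne_top hm hμs.ne fL
    · intro s hs hμs
      rw [integral_condExpL2_eq hm fL hs hμs.ne]
      exact setIntegral_congr_ae (hm s hs)
        ((hf.coeFn_toLp).mono fun x hx _ => hx)
    · exact aestronglyMeasurable_condExpL2 hm fL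
  exact (Lp.memLp (condExpL2 ℝ ℝ hm fL : Lp ℝ 2 μ)).ae_eq h_eq

/-- The hyperbolic regression function minimizes the hyperbolic generalization error. -/
theorem hyperbolic_regression_minimizes_HGE
    {X : Type*} [MeasurableSpace X] (c : ℝ) (hc : 0 < c)
    (ρ : Measure (X × ℝ)) [IsProbabilityMeasure ρ]
    (hdisc : ∀ᵐ p ∂ρ, Real.sqrt c * |p.2| < 1)
    (hφ : MemLp (fun p : X × ℝ => hypLog c p.2) 2 ρ)
    (fρ : X → ℝ)
    (hfρ : (fun p : X × ℝ => fρ p.1) =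
      ρ[(fun p : X × ℝ => hypLog c p.2) | MeasurableSpace.comap Prod.fst inferInstance])
    (g : X → ℝ) (hg : Measurable g)
    (hgL2 : MemLp (fun p : X × ℝ => g p.1) 2 ρ) :
    ∫ p, (g p.1 - hypLog c p.2) ^ 2 ∂ρ ≥ ∫ p, (fρ p.1 - hypLog c p.2) ^ 2 ∂ρ := by
  have hm : (MeasurableSpace.comap (Prod.fst : X × ℝ → X) inferInstance)
      ≤ Prod.instMeasurableSpace := measurable_fst.comap_le
  haveI : SigmaFinite (ρ.trim hm) := (isFiniteMeasure_trim hm).toSigmaFinite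
  set φ : X × ℝ → ℝ := fun p => hypLog c p.2 with hφ_def
  set F : X × ℝ → ℝ := fun p => fρ p.1 with hF_def
  set G : X × ℝ → ℝ := fun p => g p.1 with hG_def
  -- F is L²
  have hFmem : MemLp F 2 ρ := by
    rw [hfρ]; exact memℒp_condexp_two hm ρ hφ
  -- h := G - F
  set h : X × ℝ → ℝ := fun p => G p - F p with hh_def
  have hhmem : MemLp h 2 ρ := hgL2.sub hFmem
  -- measurability of h w.r.t. the comap σ-algebra
  have hfst : Measurable[MeasurableSpace.comap Prod.fst inferInstance]
      (Prod.fst : X × ℝ → X) := fun s hs => ⟨s, hs, rfl⟩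
  have hGm : StronglyMeasurable[MeasurableSpace.comap Prod.fst inferInstance] G :=
    (hg.comp hfst).stronglyMeasurable
  have hFm : StronglyMeasurable[MeasurableSpace.comap Prod.fst inferInstance] F := by
    rw [hfρ]; exact stronglyMeasurable_condExp
  have hhm : StronglyMeasurable[MeasurableSpace.comap Prod.fst inferInstance] h := hGm.sub hFm
  -- integrabilities
  have hφint : Integrable φ ρ := hφ.integrable one_le_two
  have ihφ : Integrable (fun p => h p * φ p) ρ := integrable_mul_of_memL2 hhmem hφ
  have ihF : Integrable (fun p => h p * F p) ρ := integrable_mul_of_memL2 hhmem hFmem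
  -- the cross term vanishes
  have hcross : ∫ p, h p * (F p - φ p) ∂ρ = 0 := by
    have hmul : ρ[h * φ|MeasurableSpace.comap Prod.fst inferInstance]
        =ᵐ[ρ] h * ρ[φ|MeasurableSpace.comap Prod.fst inferInstance] :=
      condExp_mul_of_stronglyMeasurable_left hhm (by exact ihφ) hφint
    have h1 : ∫ p, h p * φ p ∂ρ = ∫ p, h p * F p ∂ρ := by
      have h2 : ∫ p, (h * φ) p ∂ρ
          = ∫ p, (ρ[h * φ|MeasurableSpace.comap Prod.fst inferInstance]) p ∂ρ :=
        (integral_condExp hm).symm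
      have h3 : ∫ p, (ρ[h * φ|MeasurableSpace.comap Prod.fst inferInstance]) p ∂ρ
          = ∫ p, (h * ρ[φ|MeasurableSpace.comap Prod.fst inferInstance]) p ∂ρ :=
        integral_congr_ae hmul
      have h4 : (h * ρ[φ|MeasurableSpace.comap Prod.fst inferInstance])
          = fun p => h p * F p := by
        rw [← hfρ]; rfl
      calc ∫ p, h p * φ p ∂ρ = ∫ p, (h * φ) p ∂ρ := rfl
        _ = ∫ p, (ρ[h * φ|MeasurableSpace.comap Prod.fst inferInstance]) p ∂ρ := h2
        _ = ∫ p, (h * ρ[φ|MeasurableSpace.comap Prod.fst inferInstance]) p ∂ρ := h3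
        _ = ∫ p, h p * F p ∂ρ := by rw [h4]
    have hsub : ∫ p, h p * (F p - φ p) ∂ρ = ∫ p, h p * F p ∂ρ - ∫ p, h p * φ p ∂ρ := by
      rw [← integral_sub ihF ihφ]
      congr 1; funext p; ring
    rw [hsub, h1, sub_self]
  -- expansion of the square
  have i1 : Integrable (fun p => h p ^ 2) ρ := hhmem.integrable_sq
  have i2 : Integrable (fun p => h p * (F p - φ p)) ρ :=
    integrable_mul_of_memL2 hhmem (hFmem.sub hφ)
  have i3 : Integrable (fun p => (F p - φ p) ^ 2) ρ := (hFmem.sub hφ).integrable_sq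
  have hexp : ∫ p, (G p - φ p) ^ 2 ∂ρ
      = ∫ p, h p ^ 2 ∂ρ + 2 * ∫ p, h p * (F p - φ p) ∂ρ + ∫ p, (F p - φ p) ^ 2 ∂ρ := by
    have hpt : (fun p => (G p - φ p) ^ 2)
        = fun p => h p ^ 2 + 2 * (h p * (F p - φ p)) + (F p - φ p) ^ 2 := by
      funext p; simp only [hh_def]; ring
    rw [hpt, integral_add (by exact i1.add (i2.const_mul 2)) i3,
      integral_add i1 (i2.const_mul 2), integral_const_mul]
  have hsq : 0 ≤ ∫ p, h p ^ 2 ∂ρ := integral_nonneg fun p => sq_nonneg _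
  have hfin : ∫ p, (G p - φ p) ^ 2 ∂ρ ≥ ∫ p, (F p - φ p) ^ 2 ∂ρ := by
    rw [hexp, hcross]; linarith
  exact hfin
end

section
/- Let X be a measurable space, c > 0, and let ρ be a probability measure on X × ℝ such that √c·|y| < 1 for ρ-almost every (x,y). Write φ(y) := (1/√c)·artanh(√c·y), assume (x,y) ↦ φ(y) is square-integrable with respect to ρ, and let f_ρ : X → ℝ be such that f_ρ ∘ Prod.fst is the conditional expectation of (x,y) ↦ φ(y) with respect to the σ-algebra generated by Prod.fst. Then for every measurable g : X → ℝ such that (x,y) ↦ g(x) is square-integrable with respect to ρ, the excess hyperbolic generalization error satisfies ∫ (g(x) − φ(y))² dρ(x,y) − ∫ (f_ρ(x) − φ(y))² dρ(x,y) = ∫_X (g(x) − f_ρ(x))² dρ_X(x), where ρ_X := Measure.map Prod.fst ρ is the marginal distribution of ρ on X. -/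
open MeasureTheory

private lemma mulIntAux {α : Type*} {mα : MeasurableSpace α} {μ : Measure α} {u v : α → ℝ}
    (hu : MemLp u 2 μ) (hv : MemLp v 2 μ) : Integrable (fun p => u p * v p) μ := by
  have h : MemLp (u • v) 1 μ :=
    hv.smul hu
  exact memLp_one_iff_integrable.mp h

private lemma condexpMemTwoAux {α : Type*} {m m0 : MeasurableSpace α} (hm : m ≤ m0)
    {μ : Measure α} [IsFiniteMeasure μ] {f : α → ℝ} (hf : MemLp f 2 μ) :
    MemLp (μ[f|m]) 2 μ := by
  haveI : SigmaFinite (μ.trim hm) := inferInstance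
  set fL := hf.toLp f
  have h_eq : (condExpL2 ℝ ℝ hm fL : α → ℝ) =ᵐ[μ] μ[f|m] := by
    refine ae_eq_condExp_of_forall_setIntegral_eq hm (hf.integrable one_le_two)
      (fun s _ _ => (Lp.memLp _).integrable one_le_two |>.integrableOn)
      (fun s hs hμs => ?_) (aestronglyMeasurable_condExpL2 hm fL)
    rw [integral_condExpL2_eq hm fL hs hμs.ne]
    exact setIntegral_congr_ae (hm s hs) ((hf.coeFn_toLp).mono fun x hx _ => hx)
  exact (Lp.memLp _).ae_eq h_eq

private lemma pythagorasAux {α : Type*} {m m0 : MeasurableSpace α} (hm : m ≤ m0)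
    {μ : Measure α} [IsProbabilityMeasure μ] {F Φ Fρ : α → ℝ}
    (hF : MemLp F 2 μ) (hΦ : MemLp Φ 2 μ) (hF_sm : StronglyMeasurable[m] F)
    (hFρ : Fρ = μ[Φ|m]) :
    ∫ p, (F p - Φ p) ^ 2 ∂μ - ∫ p, (Fρ p - Φ p) ^ 2 ∂μ = ∫ p, (F p - Fρ p) ^ 2 ∂μ := by
  haveI : SigmaFinite (μ.trim hm) := inferInstance
  have hFρ2 : MemLp Fρ 2 μ := by rw [hFρ]; exact condexpMemTwoAux hm hΦ
  have hFρ_sm : StronglyMeasurable[m] Fρ := by rw [hFρ]; exact stronglyMeasurable_condExp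
  have hA_sm : StronglyMeasurable[m] (fun p => F p - Fρ p) := hF_sm.sub hFρ_sm
  have hA2 : MemLp (fun p => F p - Fρ p) 2 μ := hF.sub hFρ2
  have hB2 : MemLp (fun p => Fρ p - Φ p) 2 μ := hFρ2.sub hΦ
  have hint1 : Integrable (fun p => (F p - Fρ p) * Φ p) μ := mulIntAux hA2 hΦ
  have hint2 : Integrable (fun p => (F p - Fρ p) * Fρ p) μ := mulIntAux hA2 hFρ2
  have hintAA : Integrable (fun p => (F p - Fρ p) ^ 2) μ := hA2.integrable_sq
  have hintBB : Integrable (fun p => (Fρ p - Φ p) ^ 2) μ := hB2.integrable_sq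
  have hintAB : Integrable (fun p => (F p - Fρ p) * (Fρ p - Φ p)) μ := mulIntAux hA2 hB2
  -- the cross term vanishes
  have hcross : ∫ p, (F p - Fρ p) * (Fρ p - Φ p) ∂μ = 0 := by
    have hsub : ∫ p, (F p - Fρ p) * (Fρ p - Φ p) ∂μ
        = ∫ p, (F p - Fρ p) * Fρ p ∂μ - ∫ p, (F p - Fρ p) * Φ p ∂μ := by
      rw [← integral_sub hint2 hint1]
      congr 1; ext p; ring
    rw [hsub, sub_eq_zero]
    have hpull : μ[(fun p => F p - Fρ p) * Φ|m]
        =ᵐ[μ] (fun p => F p - Fρ p) * μ[Φ|m] :=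
      condExp_mul_of_stronglyMeasurable_left hA_sm hint1
        (hΦ.integrable one_le_two)
    calc ∫ p, (F p - Fρ p) * Fρ p ∂μ
        = ∫ p, ((fun p => F p - Fρ p) * μ[Φ|m]) p ∂μ := by rw [hFρ]; rfl
      _ = ∫ p, (μ[(fun p => F p - Fρ p) * Φ|m]) p ∂μ := (integral_congr_ae hpull.symm)
      _ = ∫ p, ((fun p => F p - Fρ p) * Φ) p ∂μ := integral_condExp hm
      _ = ∫ p, (F p - Fρ p) * Φ p ∂μ := rfl
  -- expand the squares
  have hexpand : ∫ p, (F p - Φ p) ^ 2 ∂μ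
      = ∫ p, (F p - Fρ p) ^ 2 ∂μ + (2 * ∫ p, (F p - Fρ p) * (Fρ p - Φ p) ∂μ
        + ∫ p, (Fρ p - Φ p) ^ 2 ∂μ) := by
    calc ∫ p, (F p - Φ p) ^ 2 ∂μ
        = ∫ p, ((F p - Fρ p) ^ 2
            + (2 * ((F p - Fρ p) * (Fρ p - Φ p)) + (Fρ p - Φ p) ^ 2)) ∂μ := by
          congr 1; ext p; ring
      _ = ∫ p, (F p - Fρ p) ^ 2 ∂μ
            + ∫ p, (2 * ((F p - Fρ p) * (Fρ p - Φ p)) + (Fρ p - Φ p) ^ 2) ∂μ :=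
          integral_add hintAA ((hintAB.const_mul 2).add hintBB)
      _ = ∫ p, (F p - Fρ p) ^ 2 ∂μ + (2 * ∫ p, (F p - Fρ p) * (Fρ p - Φ p) ∂μ
            + ∫ p, (Fρ p - Φ p) ^ 2 ∂μ) := by
          rw [integral_add (hintAB.const_mul 2) hintBB, integral_const_mul]
  rw [hexpand, hcross]; ring

/-- The excess hyperbolic generalization error of `g` over the hyperbolic regression
function `fρ` equals the squared `L²(ρ_X)` distance between `g` and `fρ`, where
`ρ_X` is the marginal of `ρ` on `X`. -/
theorem hyperbolic_excess_generalization_error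
    {X : Type*} [MeasurableSpace X] (c : ℝ) (hc : 0 < c)
    (ρ : Measure (X × ℝ)) [IsProbabilityMeasure ρ]
    (hdisc : ∀ᵐ p ∂ρ, Real.sqrt c * |p.2| < 1)
    (hφ : MemLp (fun p : X × ℝ => hypLog c p.2) 2 ρ)
    (fρ : X → ℝ)
    (hfρ : (fun p : X × ℝ => fρ p.1) =
      ρ[(fun p : X × ℝ => hypLog c p.2) | MeasurableSpace.comap Prod.fst inferInstance])
    (g : X → ℝ) (hg : Measurable g)
    (hgL2 : MemLp (fun p : X × ℝ => g p.1) 2 ρ) :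
    ∫ p, (g p.1 - hypLog c p.2) ^ 2 ∂ρ - ∫ p, (fρ p.1 - hypLog c p.2) ^ 2 ∂ρ
      = ∫ x, (g x - fρ x) ^ 2 ∂(Measure.map Prod.fst ρ) := by
  have hm : MeasurableSpace.comap (Prod.fst : X × ℝ → X) inferInstance
      ≤ (inferInstance : MeasurableSpace (X × ℝ)) := measurable_fst.comap_le
  have hfst : Measurable[MeasurableSpace.comap (Prod.fst : X × ℝ → X) inferInstance]
      (Prod.fst : X × ℝ → X) := Measurable.of_comap_le le_rfl
  have hF_sm : StronglyMeasurable[MeasurableSpace.comap (Prod.fst : X × ℝ → X) inferInstance]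
      (fun p : X × ℝ => g p.1) := (hg.comp hfst).stronglyMeasurable
  have hmain := pythagorasAux hm hgL2 hφ hF_sm hfρ
  -- fρ is measurable
  have hFρ_sm : StronglyMeasurable[MeasurableSpace.comap (Prod.fst : X × ℝ → X) inferInstance]
      (fun p : X × ℝ => fρ p.1) := by rw [hfρ]; exact stronglyMeasurable_condExp
  have hfρ_meas : Measurable fρ := by
    intro s hs
    obtain ⟨t, ht, hteq⟩ := MeasurableSpace.measurableSet_comap.mp (hFρ_sm.measurable hs)
    have h : t = fρ ⁻¹' s := by
      ext x
      have := congrArg (fun S => (x, (0 : ℝ)) ∈ S) hteq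
      simpa using this
    rwa [← h]
  have hmap : ∫ x, (g x - fρ x) ^ 2 ∂(Measure.map Prod.fst ρ)
      = ∫ p : X × ℝ, (g p.1 - fρ p.1) ^ 2 ∂ρ := by
    rw [integral_map (f := fun x => (g x - fρ x) ^ 2) measurable_fst.aemeasurable
      (((hg.sub hfρ_meas).pow_const 2).aestronglyMeasurable)]
  rw [hmap]
  exact hmain
end
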